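/- Let C be a graded strongly classical 2-absorbing second submodule of M and let I = ⊕_{β∈G} I_β and J = ⊕_{γ∈G} J_γ be graded ideals of R. Then for every r ∈ h(R), every β, γ ∈ G, and every graded submodule N of M with r·I_β·J_γ·C ⊆ N, either r·I_β·C ⊆ N or r·J_γ·C ⊆ N or I_β·J_γ·C ⊆ N. -/
import Mathlib


open Pointwise

section GradedDefs

variable {G : Type*} [Group G] [DecidableEq G] {R : Type*} [CommRing R]
  {M : Type*} [AddCommGroup M] [Module R M]

/-- `R` is a `G`-graded commutative ring via the additive subgroups `𝒜 α`:
`R_α R_β ⊆ R_{αβ}` and `R = ⊕_{α ∈ G} R_α`. -/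
structure IsRingGrading (𝒜 : G → AddSubgroup R) : Prop where
  one_mem : (1 : R) ∈ 𝒜 1
  mul_mem : ∀ ⦃α β : G⦄ ⦃r s : R⦄, r ∈ 𝒜 α → s ∈ 𝒜 β → r * s ∈ 𝒜 (α * β)
  isInternal : DirectSum.IsInternal 𝒜

/-- `M` is a graded module over the `G`-graded ring `R`:
`R_α M_β ⊆ M_{αβ}` and `M = ⊕_{α ∈ G} M_α`. -/
structure IsModuleGrading (𝒜 : G → AddSubgroup R) (ℳ : G → AddSubgroup M) : Prop where
  smul_mem : ∀ ⦃α β : G⦄ ⦃r : R⦄ ⦃m : M⦄, r ∈ 𝒜 α → m ∈ ℳ β → r • m ∈ ℳ (α * β)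
  isInternal : DirectSum.IsInternal ℳ

/-- A submodule `N` of `M` is a graded submodule iff `N = ⊕_{α ∈ G} (N ∩ M_α)`,
equivalently, every element of `N` is a sum of homogeneous elements of `N`. -/
def IsGradedSubmodule (ℳ : G → AddSubgroup M) (N : Submodule R M) : Prop :=
  ∀ n ∈ N, n ∈ Submodule.span R {m : M | m ∈ N ∧ ∃ α, m ∈ ℳ α}

/-- An ideal `I` of `R` is a graded ideal iff `I = ⊕_{α ∈ G} (I ∩ R_α)`. -/
def IsGradedIdeal (𝒜 : G → AddSubgroup R) (I : Ideal R) : Prop :=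
  ∀ r ∈ I, r ∈ Ideal.span {s : R | s ∈ I ∧ ∃ α, s ∈ 𝒜 α}

/-- A proper graded submodule `C` of `M` is completely graded irreducible if whenever
`C = ⋂_{λ ∈ Δ} C_λ` for a family of graded submodules `C_λ`, then `C = C_β` for some `β`. -/
def CompletelyGradedIrreducible (ℳ : G → AddSubgroup M) (C : Submodule R M) : Prop :=
  IsGradedSubmodule ℳ C ∧ C ≠ ⊤ ∧
    ∀ S : Set (Submodule R M), (∀ D ∈ S, IsGradedSubmodule ℳ D) → C = sInf S → C ∈ S

/-- A non-zero graded submodule `C` of `M` is a graded classical 2-absorbing second submodule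
if whenever `r, s, t ∈ h(R)`, `U` is a completely graded irreducible submodule of `M` and
`r·s·t·C ⊆ U`, then `r·s·C ⊆ U` or `s·t·C ⊆ U` or `r·t·C ⊆ U`. -/
def IsGrClassical2AbsorbingSecond (𝒜 : G → AddSubgroup R) (ℳ : G → AddSubgroup M)
    (C : Submodule R M) : Prop :=
  C ≠ ⊥ ∧ IsGradedSubmodule ℳ C ∧
    ∀ r s t : R, (∃ α, r ∈ 𝒜 α) → (∃ β, s ∈ 𝒜 β) → (∃ γ, t ∈ 𝒜 γ) →
      ∀ U : Submodule R M, CompletelyGradedIrreducible ℳ U →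
        r • s • t • C ≤ U → (r • s • C ≤ U ∨ s • t • C ≤ U ∨ r • t • C ≤ U)

/-- A non-zero graded submodule `C` of `M` is a graded strongly classical 2-absorbing second
submodule if whenever `r, s, t ∈ h(R)`, `U₁, U₂, U₃` are completely graded irreducible
submodules of `M` and `r·s·t·C ⊆ U₁ ∩ U₂ ∩ U₃`, then `r·s·C ⊆ U₁ ∩ U₂ ∩ U₃` or
`s·t·C ⊆ U₁ ∩ U₂ ∩ U₃` or `r·t·C ⊆ U₁ ∩ U₂ ∩ U₃`. -/
def IsGrStronglyClassical2AbsorbingSecond (𝒜 : G → AddSubgroup R) (ℳ : G → AddSubgroup M)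
    (C : Submodule R M) : Prop :=
  C ≠ ⊥ ∧ IsGradedSubmodule ℳ C ∧
    ∀ r s t : R, (∃ α, r ∈ 𝒜 α) → (∃ β, s ∈ 𝒜 β) → (∃ γ, t ∈ 𝒜 γ) →
      ∀ U₁ U₂ U₃ : Submodule R M, CompletelyGradedIrreducible ℳ U₁ →
        CompletelyGradedIrreducible ℳ U₂ → CompletelyGradedIrreducible ℳ U₃ →
        r • s • t • C ≤ U₁ ⊓ U₂ ⊓ U₃ →
        (r • s • C ≤ U₁ ⊓ U₂ ⊓ U₃ ∨ s • t • C ≤ U₁ ⊓ U₂ ⊓ U₃ ∨ r • t • C ≤ U₁ ⊓ U₂ ⊓ U₃)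

/-- A non-zero graded submodule `S` of `M` is a graded weakly second submodule if whenever
`r, s ∈ h(R)`, `N` is a graded submodule of `M` and `r·s·S ⊆ N`, then `r·S ⊆ N` or `s·S ⊆ N`. -/
def IsGrWeaklySecond (𝒜 : G → AddSubgroup R) (ℳ : G → AddSubgroup M)
    (S : Submodule R M) : Prop :=
  S ≠ ⊥ ∧ IsGradedSubmodule ℳ S ∧
    ∀ r s : R, (∃ α, r ∈ 𝒜 α) → (∃ β, s ∈ 𝒜 β) →
      ∀ N : Submodule R M, IsGradedSubmodule ℳ N →
        r • s • S ≤ N → (r • S ≤ N ∨ s • S ≤ N)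

/-- A proper graded ideal `I` of `R` is a graded 2-absorbing ideal if whenever `r, s, t ∈ h(R)`
with `r·s·t ∈ I`, then `r·s ∈ I` or `r·t ∈ I` or `s·t ∈ I`. -/
def IsGr2AbsorbingIdeal (𝒜 : G → AddSubgroup R) (I : Ideal R) : Prop :=
  I ≠ ⊤ ∧ IsGradedIdeal 𝒜 I ∧
    ∀ r s t : R, (∃ α, r ∈ 𝒜 α) → (∃ β, s ∈ 𝒜 β) → (∃ γ, t ∈ 𝒜 γ) →
      r * s * t ∈ I → (r * s ∈ I ∨ r * t ∈ I ∨ s * t ∈ I)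

end GradedDefs

section AuxLemmas

variable {G : Type*} [Group G] [DecidableEq G] {R : Type*} [CommRing R]
  {M : Type*} [AddCommGroup M] [Module R M]

lemma mySmul_le_iff {a : R} {S N : Submodule R M} : a • S ≤ N ↔ ∀ m ∈ S, a • m ∈ N := by
  constructor
  · intro h m hm; exact h (Submodule.smul_mem_pointwise_smul m a S hm)
  · intro h x hx
    obtain ⟨m, hm, rfl⟩ := Set.mem_smul_set.mp hx
    exact h m hm

lemma mySmul2_le_iff {a b : R} {S N : Submodule R M} :
    a • b • S ≤ N ↔ ∀ m ∈ S, a • b • m ∈ N := by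
  rw [mySmul_le_iff]
  constructor
  · intro h m hm; exact h _ (Submodule.smul_mem_pointwise_smul m b S hm)
  · intro h x hx
    obtain ⟨m, hm, rfl⟩ := Set.mem_smul_set.mp hx
    exact h m hm

lemma mySmul3_le_iff {a b c : R} {S N : Submodule R M} :
    a • b • c • S ≤ N ↔ ∀ m ∈ S, a • b • c • m ∈ N := by
  rw [mySmul_le_iff]
  constructor
  · intro h m hm
    exact h _ (Submodule.smul_mem_pointwise_smul _ b _
      (Submodule.smul_mem_pointwise_smul m c S hm))
  · intro h x hx
    obtain ⟨y, hy, rfl⟩ := Set.mem_smul_set.mp hx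
    obtain ⟨m, hm, rfl⟩ := Set.mem_smul_set.mp hy
    exact h m hm

omit [Group G] [DecidableEq G] in
lemma exists_cgi (ℳ : G → AddSubgroup M) (N : Submodule R M)
    (hN : IsGradedSubmodule ℳ N) (m : M) (hm : m ∉ N) :
    ∃ U : Submodule R M, CompletelyGradedIrreducible ℳ U ∧ N ≤ U ∧ m ∉ U := by
  set s : Set (Submodule R M) := {P | IsGradedSubmodule ℳ P ∧ N ≤ P ∧ m ∉ P} with hs
  have hchain : ∀ c ⊆ s, IsChain (· ≤ ·) c → ∀ y ∈ c, ∃ ub ∈ s, ∀ z ∈ c, z ≤ ub := by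
    intro c hcs hcchain y hyc
    have hne : c.Nonempty := ⟨y, hyc⟩
    have hdir : DirectedOn (· ≤ ·) c := hcchain.directedOn
    refine ⟨sSup c, ⟨?_, ?_, ?_⟩, fun z hz => le_sSup hz⟩
    · intro x hx
      obtain ⟨P, hPc, hxP⟩ := (Submodule.mem_sSup_of_directed hne hdir).mp hx
      have := (hcs hPc).1 x hxP
      refine Submodule.span_mono ?_ this
      rintro w ⟨hwP, α, hwα⟩
      exact ⟨(le_sSup hPc : P ≤ sSup c) hwP, α, hwα⟩
    · exact (hcs hyc).2.1.trans (le_sSup hyc)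
    · intro hmem
      obtain ⟨P, hPc, hxP⟩ := (Submodule.mem_sSup_of_directed hne hdir).mp hmem
      exact (hcs hPc).2.2 hxP
  obtain ⟨U, _, hUs, hmax⟩ := zorn_le_nonempty₀ s hchain N ⟨hN, le_rfl, hm⟩
  refine ⟨U, ⟨hUs.1, ?_, ?_⟩, hUs.2.1, hUs.2.2⟩
  · intro h; exact hUs.2.2 (h ▸ Submodule.mem_top)
  · intro S hSgr hinf
    by_cases hall : ∀ D ∈ S, m ∈ D
    · exact absurd (hinf ▸ Submodule.mem_sInf.mpr hall) hUs.2.2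
    · push_neg at hall
      obtain ⟨D, hDS, hmD⟩ := hall
      have hUD : U ≤ D := hinf ▸ sInf_le hDS
      have hDs : D ∈ s := ⟨hSgr D hDS, hUs.2.1.trans hUD, hmD⟩
      have : D = U := le_antisymm (hmax hDs hUD) hUD
      exact this ▸ hDS

lemma gr2abs_aux (𝒜 : G → AddSubgroup R) (ℳ : G → AddSubgroup M)
    (C : Submodule R M) (hC : IsGrStronglyClassical2AbsorbingSecond 𝒜 ℳ C)
    (r s t : R) (hr : ∃ α, r ∈ 𝒜 α) (hs : ∃ α, s ∈ 𝒜 α) (ht : ∃ α, t ∈ 𝒜 α)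
    (N : Submodule R M) (hN : IsGradedSubmodule ℳ N)
    (h : ∀ m ∈ C, r • s • t • m ∈ N) :
    (∀ m ∈ C, r • s • m ∈ N) ∨ (∀ m ∈ C, s • t • m ∈ N) ∨ (∀ m ∈ C, r • t • m ∈ N) := by
  by_contra hcon
  push_neg at hcon
  obtain ⟨⟨x₁, hx₁C, hx₁N⟩, ⟨x₂, hx₂C, hx₂N⟩, ⟨x₃, hx₃C, hx₃N⟩⟩ := hcon
  obtain ⟨U₁, hU₁, hNU₁, hx₁U⟩ := exists_cgi ℳ N hN _ hx₁N
  obtain ⟨U₂, hU₂, hNU₂, hx₂U⟩ := exists_cgi ℳ N hN _ hx₂N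
  obtain ⟨U₃, hU₃, hNU₃, hx₃U⟩ := exists_cgi ℳ N hN _ hx₃N
  have hle : r • s • t • C ≤ U₁ ⊓ U₂ ⊓ U₃ := mySmul3_le_iff.mpr fun m hm =>
    Submodule.mem_inf.mpr ⟨Submodule.mem_inf.mpr ⟨hNU₁ (h m hm), hNU₂ (h m hm)⟩, hNU₃ (h m hm)⟩
  rcases hC.2.2 r s t hr hs ht U₁ U₂ U₃ hU₁ hU₂ hU₃ hle with h' | h' | h'
  · exact hx₁U (mySmul2_le_iff.mp (h'.trans (inf_le_left.trans inf_le_left)) x₁ hx₁C)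
  · exact hx₂U (mySmul2_le_iff.mp (h'.trans (inf_le_left.trans inf_le_right)) x₂ hx₂C)
  · exact hx₃U (mySmul2_le_iff.mp (h'.trans inf_le_right) x₃ hx₃C)

end AuxLemmas

theorem stmt11 {G : Type*} [Group G] [DecidableEq G] {R : Type*} [CommRing R]
    {M : Type*} [AddCommGroup M] [Module R M]
    (𝒜 : G → AddSubgroup R) (ℳ : G → AddSubgroup M)
    (h𝒜 : IsRingGrading 𝒜) (hℳ : IsModuleGrading 𝒜 ℳ)
    (C : Submodule R M) (hC : IsGrStronglyClassical2AbsorbingSecond 𝒜 ℳ C)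
    (I J : Ideal R) (hI : IsGradedIdeal 𝒜 I) (hJ : IsGradedIdeal 𝒜 J)
    (r : R) (hr : ∃ α, r ∈ 𝒜 α) (β γ : G)
    (N : Submodule R M) (hN : IsGradedSubmodule ℳ N)
    (hsub : ∀ a b : R, a ∈ I → a ∈ 𝒜 β → b ∈ J → b ∈ 𝒜 γ → r • a • b • C ≤ N) :
    (∀ a : R, a ∈ I → a ∈ 𝒜 β → r • a • C ≤ N) ∨
      (∀ b : R, b ∈ J → b ∈ 𝒜 γ → r • b • C ≤ N) ∨
      (∀ a b : R, a ∈ I → a ∈ 𝒜 β → b ∈ J → b ∈ 𝒜 γ → a • b • C ≤ N) := by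
  simp only [mySmul2_le_iff]
  by_contra hcon
  push_neg at hcon
  obtain ⟨⟨a₀, ha₀I, ha₀β, hA⟩, ⟨b₀, hb₀J, hb₀γ, hB⟩,
    ⟨a₁, b₁, ha₁I, ha₁β, hb₁J, hb₁γ, hAB⟩⟩ := hcon
  replace hA : ¬ ∀ m ∈ C, r • a₀ • m ∈ N := by push_neg; exact hA
  replace hB : ¬ ∀ m ∈ C, r • b₀ • m ∈ N := by push_neg; exact hB
  replace hAB : ¬ ∀ m ∈ C, a₁ • b₁ • m ∈ N := by push_neg; exact hAB
  have key : ∀ a b : R, a ∈ I → a ∈ 𝒜 β → b ∈ J → b ∈ 𝒜 γ →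
      (∀ m ∈ C, r • a • m ∈ N) ∨ (∀ m ∈ C, a • b • m ∈ N) ∨ (∀ m ∈ C, r • b • m ∈ N) :=
    fun a b haI haβ hbJ hbγ =>
      gr2abs_aux 𝒜 ℳ C hC r a b hr ⟨β, haβ⟩ ⟨γ, hbγ⟩ N hN
        (mySmul3_le_iff.mp (hsub a b haI haβ hbJ hbγ))
  have h1 : ∀ m ∈ C, a₀ • b₀ • m ∈ N := by
    rcases key a₀ b₀ ha₀I ha₀β hb₀J hb₀γ with h | h | h
    · exact absurd h hA
    · exact h
    · exact absurd h hB
  have h2 : ∀ b : R, b ∈ J → b ∈ 𝒜 γ → ∀ m ∈ C, a₀ • b • m ∈ N := by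
    intro b hbJ hbγ
    rcases key a₀ b ha₀I ha₀β hbJ hbγ with h | h | h
    · exact absurd h hA
    · exact h
    · rcases key a₀ (b + b₀) ha₀I ha₀β (J.add_mem hbJ hb₀J) ((𝒜 γ).add_mem hbγ hb₀γ)
        with h' | h' | h'
      · exact absurd h' hA
      · intro m hm
        rw [show a₀ • b • m = a₀ • (b + b₀) • m - a₀ • b₀ • m by
          rw [add_smul, smul_add]; abel]
        exact N.sub_mem (h' m hm) (h1 m hm)
      · refine absurd (fun m hm => ?_) hB
        rw [show r • b₀ • m = r • (b + b₀) • m - r • b • m by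
          rw [add_smul, smul_add]; abel]
        exact N.sub_mem (h' m hm) (h m hm)
  have h3 : ∀ a : R, a ∈ I → a ∈ 𝒜 β → ∀ m ∈ C, a • b₀ • m ∈ N := by
    intro a haI haβ
    rcases key a b₀ haI haβ hb₀J hb₀γ with h | h | h
    · rcases key (a + a₀) b₀ (I.add_mem haI ha₀I) ((𝒜 β).add_mem haβ ha₀β) hb₀J hb₀γ
        with h' | h' | h'
      · refine absurd (fun m hm => ?_) hA
        rw [show r • a₀ • m = r • (a + a₀) • m - r • a • m by
          rw [add_smul, smul_add]; abel]
        exact N.sub_mem (h' m hm) (h m hm)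
      · intro m hm
        rw [show a • b₀ • m = (a + a₀) • b₀ • m - a₀ • b₀ • m by rw [add_smul]; abel]
        exact N.sub_mem (h' m hm) (h1 m hm)
      · exact absurd h' hB
    · exact h
    · exact absurd h hB
  have hrab : (∀ m ∈ C, r • a₁ • m ∈ N) ∧ (∀ m ∈ C, r • b₁ • m ∈ N) := by
    rcases key a₁ b₁ ha₁I ha₁β hb₁J hb₁γ with h | h | h
    · refine ⟨h, ?_⟩
      rcases key (a₁ + a₀) b₁ (I.add_mem ha₁I ha₀I) ((𝒜 β).add_mem ha₁β ha₀β) hb₁J hb₁γ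
        with h' | h' | h'
      · refine absurd (fun m hm => ?_) hA
        rw [show r • a₀ • m = r • (a₁ + a₀) • m - r • a₁ • m by
          rw [add_smul, smul_add]; abel]
        exact N.sub_mem (h' m hm) (h m hm)
      · refine absurd (fun m hm => ?_) hAB
        rw [show a₁ • b₁ • m = (a₁ + a₀) • b₁ • m - a₀ • b₁ • m by rw [add_smul]; abel]
        exact N.sub_mem (h' m hm) (h2 b₁ hb₁J hb₁γ m hm)
      · exact h'
    · exact absurd h hAB
    · refine ⟨?_, h⟩
      rcases key a₁ (b₁ + b₀) ha₁I ha₁β (J.add_mem hb₁J hb₀J) ((𝒜 γ).add_mem hb₁γ hb₀γ)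
        with h' | h' | h'
      · exact h'
      · refine absurd (fun m hm => ?_) hAB
        rw [show a₁ • b₁ • m = a₁ • (b₁ + b₀) • m - a₁ • b₀ • m by
          rw [add_smul, smul_add]; abel]
        exact N.sub_mem (h' m hm) (h3 a₁ ha₁I ha₁β m hm)
      · refine absurd (fun m hm => ?_) hB
        rw [show r • b₀ • m = r • (b₁ + b₀) • m - r • b₁ • m by
          rw [add_smul, smul_add]; abel]
        exact N.sub_mem (h' m hm) (h m hm)
  obtain ⟨hra, hrb⟩ := hrab
  rcases key (a₁ + a₀) (b₁ + b₀) (I.add_mem ha₁I ha₀I) ((𝒜 β).add_mem ha₁β ha₀β)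
    (J.add_mem hb₁J hb₀J) ((𝒜 γ).add_mem hb₁γ hb₀γ) with h | h | h
  · refine absurd (fun m hm => ?_) hA
    rw [show r • a₀ • m = r • (a₁ + a₀) • m - r • a₁ • m by
      rw [add_smul, smul_add]; abel]
    exact N.sub_mem (h m hm) (hra m hm)
  · refine absurd (fun m hm => ?_) hAB
    rw [show a₁ • b₁ • m =
        (a₁ + a₀) • (b₁ + b₀) • m - a₁ • b₀ • m - a₀ • b₁ • m - a₀ • b₀ • m by
      rw [add_smul, add_smul, smul_add, smul_add]; abel]
    exact N.sub_mem (N.sub_mem (N.sub_mem (h m hm) (h3 a₁ ha₁I ha₁β m hm))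
      (h2 b₁ hb₁J hb₁γ m hm)) (h1 m hm)
  · refine absurd (fun m hm => ?_) hB
    rw [show r • b₀ • m = r • (b₁ + b₀) • m - r • b₁ • m by
      rw [add_smul, smul_add]; abel]
    exact N.sub_mem (h m hm) (hrb m hm)
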